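/- Let G be a finite simple graph and m an integer. Then the matching number ν(G) is at most m if and only if V(G) can be partitioned into three pairwise disjoint (possibly empty) sets U, R, S such that: (i) every connected component of G[R] has odd size at least 3; (ii) S is an independent set in G; (iii) every neighbor in G of a vertex of S lies in U; and (iv) 2·|U| + |R| − odd(G[R]) ≤ 2m, where odd(G[R]) is the number of connected components of G[R] with an odd number of vertices (condition (iv) is equivalent to |U| + ½(|R| − odd(G[R])) ≤ m). -/

import Mathlib

/-- The matching number of `G`: the maximum number of pairwise vertex-disjoint edges. -/
noncomputable def matchingNumber {V : Type*} (G : SimpleGraph V) : ℕ :=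
  sSup {n | ∃ s : Set (Sym2 V), s ⊆ G.edgeSet ∧
    (s.Pairwise fun e f => ∀ x, x ∈ e → x ∉ f) ∧ s.ncard = n}

open SimpleGraph Set

namespace TBAux

variable {V : Type*}

/-- `s` is a matching in `G`. -/
def IsMch (G : SimpleGraph V) (s : Set (Sym2 V)) : Prop :=
  s ⊆ G.edgeSet ∧ (s.Pairwise fun e f => ∀ x, x ∈ e → x ∉ f)

/-- vertex support of a set of edges -/
def MSupp (s : Set (Sym2 V)) : Set V := {x | ∃ e ∈ s, x ∈ e}

lemma mem_MSupp {s : Set (Sym2 V)} {x : V} : x ∈ MSupp s ↔ ∃ e ∈ s, x ∈ e := Iff.rfl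

lemma MSupp_mono {s t : Set (Sym2 V)} (h : s ⊆ t) : MSupp s ⊆ MSupp t :=
  fun _ ⟨e, he, hx⟩ => ⟨e, h he, hx⟩

lemma IsMch.subset {G : SimpleGraph V} {s t : Set (Sym2 V)} (h : IsMch G t) (hst : s ⊆ t) :
    IsMch G s := ⟨hst.trans h.1, h.2.mono hst⟩

lemma IsMch.eq_of_mem {G : SimpleGraph V} {s : Set (Sym2 V)} (h : IsMch G s) {e f : Sym2 V}
    {x : V} (he : e ∈ s) (hf : f ∈ s) (hxe : x ∈ e) (hxf : x ∈ f) : e = f := by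
  by_contra hne
  exact h.2 he hf hne x hxe hxf

lemma MSupp_empty : MSupp (∅ : Set (Sym2 V)) = ∅ := by
  ext x; simp [MSupp]

lemma MSupp_insert {e : Sym2 V} {s : Set (Sym2 V)} :
    MSupp (insert e s) = {x | x ∈ e} ∪ MSupp s := by
  ext x; simp [MSupp, or_and_right, exists_or]

lemma everts_eq {a b : V} : {x | x ∈ s(a, b)} = {a, b} := by
  ext x; simp [Sym2.mem_iff]

section fin
variable [Finite V] {G : SimpleGraph V} {s : Set (Sym2 V)}

lemma IsMch.finite (h : IsMch G s) : s.Finite := Set.toFinite s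

lemma ncard_MSupp (h : IsMch G s) : (MSupp s).ncard = 2 * s.ncard := by
  refine Set.Finite.induction_on (motive := fun t _ => IsMch G t → (MSupp t).ncard = 2 * t.ncard)
    s (Set.toFinite s) (by simp [MSupp_empty]) ?_ h
  intro e t het htfin ih inst
  have hm : IsMch G t := inst.subset (Set.subset_insert _ _)
  have he : e ∈ G.edgeSet := inst.1 (Set.mem_insert _ _)
  obtain ⟨a, b⟩ := e
  have hab : a ≠ b := by
    intro hab
    exact G.not_isDiag_of_mem_edgeSet he (by simp [hab])
  have hdisj : Disjoint {x | x ∈ s(a, b)} (MSupp t) := by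
    rw [Set.disjoint_left]
    rintro x hxe ⟨f, hf, hxf⟩
    have : s(a, b) = f := inst.eq_of_mem (Set.mem_insert _ _) (Set.mem_insert_of_mem _ hf) hxe hxf
    subst this
    exact het hf
  rw [MSupp_insert, Set.ncard_union_eq hdisj (by rw [everts_eq]; exact Set.toFinite _)
    (Set.toFinite _), everts_eq, Set.ncard_pair hab, ih hm,
    Set.ncard_insert_of_notMem het htfin, mul_add]
  omega

lemma ncard_le_matchingNumber (h : IsMch G s) : s.ncard ≤ matchingNumber G := by
  cases nonempty_fintype V
  apply le_csSup
  · refine ⟨G.edgeSet.ncard, ?_⟩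
    rintro n ⟨t, ht1, _, rfl⟩
    exact Set.ncard_le_ncard ht1 (Set.toFinite _)
  · exact ⟨s, h.1, h.2, rfl⟩

lemma exists_max_mch (G : SimpleGraph V) :
    ∃ s : Set (Sym2 V), IsMch G s ∧ s.ncard = matchingNumber G := by
  cases nonempty_fintype V
  have hbdd : BddAbove {n | ∃ s : Set (Sym2 V), s ⊆ G.edgeSet ∧
      (s.Pairwise fun e f => ∀ x, x ∈ e → x ∉ f) ∧ s.ncard = n} := by
    refine ⟨G.edgeSet.ncard, ?_⟩
    rintro n ⟨t, ht1, _, rfl⟩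
    exact Set.ncard_le_ncard ht1 (Set.toFinite _)
  have h := Nat.sSup_mem (s := {n | ∃ s : Set (Sym2 V), s ⊆ G.edgeSet ∧
      (s.Pairwise fun e f => ∀ x, x ∈ e → x ∉ f) ∧ s.ncard = n})
    ⟨0, ∅, by simp⟩ hbdd
  obtain ⟨s, h1, h2, h3⟩ := h
  exact ⟨s, ⟨h1, h2⟩, h3⟩

lemma symm_disj : Symmetric fun (e f : Sym2 V) => ∀ z, z ∈ e → z ∉ f := by
  intro e f h z hze hzf
  exact h z hzf hze

instance symmDisjInst : Std.Symm (fun (e f : Sym2 V) => ∀ z, z ∈ e → z ∉ f) :=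
  ⟨fun _ _ h => symm_disj h⟩

lemma mem_MSupp_of_mem {s : Set (Sym2 V)} {e : Sym2 V} {x : V} (he : e ∈ s) (hx : x ∈ e) :
    x ∈ MSupp s := ⟨e, he, hx⟩

lemma swap {s : Set (Sym2 V)} (hs : IsMch G s) {x y u : V} (hf : s(x, y) ∈ s)
    (he : s(u, x) ∈ G.edgeSet) (hu : u ∉ MSupp s) :
    IsMch G (insert s(u, x) (s \ {s(x, y)})) ∧
    MSupp (insert s(u, x) (s \ {s(x, y)})) = (MSupp s \ {y}) ∪ {u} ∧
    (insert s(u, x) (s \ {s(x, y)})).ncard = s.ncard := by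
  have hxy : x ≠ y := by
    intro h
    exact G.not_isDiag_of_mem_edgeSet (hs.1 hf) (by simp [h])
  have hxmem : x ∈ MSupp s := ⟨s(x, y), hf, by simp⟩
  have hymem : y ∈ MSupp s := ⟨s(x, y), hf, by simp⟩
  have hux : u ≠ x := fun h => hu (h ▸ hxmem)
  have huy : u ≠ y := fun h => hu (h ▸ hymem)
  have hnew : s(u, x) ∉ s := fun h => hu ⟨s(u, x), h, by simp⟩
  have huniqx : ∀ g ∈ s, x ∈ g → g = s(x, y) := fun g hg hxg =>
    hs.eq_of_mem hg hf hxg (by simp)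
  have huniqy : ∀ g ∈ s, y ∈ g → g = s(x, y) := fun g hg hyg =>
    hs.eq_of_mem hg hf hyg (by simp)
  have h1 : MSupp (s \ {s(x, y)}) = MSupp s \ {x, y} := by
    ext z
    constructor
    · rintro ⟨g, ⟨hg, hgne⟩, hzg⟩
      refine ⟨⟨g, hg, hzg⟩, ?_⟩
      rintro (rfl | rfl)
      · exact hgne (huniqx g hg hzg)
      · exact hgne (huniqy g hg hzg)
    · rintro ⟨⟨g, hg, hzg⟩, hz⟩
      refine ⟨g, ⟨hg, ?_⟩, hzg⟩
      rintro rfl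
      rcases Sym2.mem_iff.mp hzg with rfl | rfl
      · exact hz (Or.inl rfl)
      · exact hz (Or.inr rfl)
  refine ⟨⟨Set.insert_subset he (Set.diff_subset.trans hs.1), ?_⟩, ?_, ?_⟩
  · refine (hs.2.mono Set.diff_subset).insert_of_symm ?_
    intro g hg _ z hz
    rcases Sym2.mem_iff.mp hz with rfl | rfl
    · exact fun h2 => hu ⟨g, hg.1, h2⟩
    · exact fun h2 => hg.2 (huniqx g hg.1 h2)
  · rw [MSupp_insert, h1, everts_eq]
    ext z
    simp only [Set.mem_union, Set.mem_diff, Set.mem_insert_iff, Set.mem_singleton_iff]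
    constructor
    · rintro ((rfl | rfl) | ⟨hz1, hz2⟩)
      · exact Or.inr rfl
      · exact Or.inl ⟨hxmem, hxy⟩
      · exact Or.inl ⟨hz1, fun h => hz2 (Or.inr h)⟩
    · rintro (⟨hz1, hz2⟩ | rfl)
      · by_cases hzx : z = x
        · exact Or.inl (Or.inr hzx)
        · exact Or.inr ⟨hz1, by rintro (h | h) <;> [exact hzx h; exact hz2 h]⟩
      · exact Or.inl (Or.inl rfl)
  · rw [Set.ncard_insert_of_notMem (fun h => hnew h.1) (Set.toFinite _),
      Set.ncard_diff_singleton_add_one hf (Set.toFinite _)]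

lemma follow (n : ℕ) : ∀ M N : Set (Sym2 V), (M \ N).ncard + (N \ M).ncard ≤ n →
    IsMch G M → IsMch G N → M.ncard = matchingNumber G → N.ncard = matchingNumber G →
    ∀ u : V, u ∉ MSupp M → u ∈ MSupp N →
    ∃ t : V, t ≠ u ∧ t ∈ MSupp M ∧ t ∉ MSupp N ∧
      (∃ N' : Set (Sym2 V), IsMch G N' ∧ N'.ncard = matchingNumber G ∧
        MSupp N' = (MSupp N \ {u}) ∪ {t} ∧ N' \ N ⊆ M ∧ N ∩ M ⊆ N') ∧
      (∃ M' : Set (Sym2 V), IsMch G M' ∧ M'.ncard = matchingNumber G ∧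
        MSupp M' = (MSupp M \ {t}) ∪ {u}) := by
  induction n with
  | zero =>
    intro M N hn _ _ _ _ u huM huN
    obtain ⟨e, heN, hue⟩ := huN
    have heM : e ∉ M := fun h => huM ⟨e, h, hue⟩
    have : 0 < (N \ M).ncard := (Set.ncard_pos (Set.toFinite _)).mpr ⟨e, heN, heM⟩
    omega
  | succ n ih =>
    intro M N hn hM hN hMmax hNmax u huM huN
    obtain ⟨e, heN, hue⟩ := huN
    obtain ⟨x, rfl⟩ : ∃ x, e = s(u, x) := Sym2.mem_iff_exists.mp hue
    have hux : u ≠ x := by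
      intro h
      exact G.not_isDiag_of_mem_edgeSet (hN.1 heN) (by simp [h])
    -- x must be covered by M, else we could augment M
    have hxM : x ∈ MSupp M := by
      by_contra hxM
      have hins : IsMch G (insert s(u, x) M) := by
        refine ⟨Set.insert_subset (hN.1 heN) hM.1, ?_⟩
        refine hM.2.insert_of_symm ?_
        intro g hg _ z hz
        rcases Sym2.mem_iff.mp hz with rfl | rfl
        · exact fun h2 => huM ⟨g, hg, h2⟩
        · exact fun h2 => hxM ⟨g, hg, h2⟩
      have hcard := ncard_le_matchingNumber hins
      rw [Set.ncard_insert_of_notMem (fun h => huM ⟨_, h, by simp⟩) (Set.toFinite _),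
        hMmax] at hcard
      omega
    obtain ⟨f, hfM, hxf⟩ := hxM
    obtain ⟨y, rfl⟩ : ∃ y, f = s(x, y) := Sym2.mem_iff_exists.mp hxf
    have hxy : x ≠ y := by
      intro h
      exact G.not_isDiag_of_mem_edgeSet (hM.1 hfM) (by simp [h])
    have hymemM : y ∈ MSupp M := ⟨s(x, y), hfM, by simp⟩
    have hyu : y ≠ u := fun h => huM (h ▸ hymemM)
    have hfN : s(x, y) ∉ N := by
      intro h
      have hef : s(u, x) = s(x, y) := hN.eq_of_mem (x := x) heN h (by simp) (by simp)
      exact huM ⟨s(x, y), hfM, by rw [← hef]; simp⟩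
    have heM : s(u, x) ∉ M := fun h => huM ⟨_, h, by simp⟩
    obtain ⟨hM₂, hM₂supp, hM₂card⟩ := swap hM hfM (hN.1 heN) huM
    set M₂ := insert s(u, x) (M \ {s(x, y)}) with hM₂def
    by_cases hyN : y ∈ MSupp N
    · -- recursive case: follow the path further from y
      have hyM₂ : y ∉ MSupp M₂ := by
        rw [hM₂supp]
        rintro (⟨_, h⟩ | h)
        · exact h rfl
        · exact hyu h
      have hmeas : (M₂ \ N).ncard + (N \ M₂).ncard ≤ n := by
        have h1 : M₂ \ N = (M \ N) \ {s(x, y)} := by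
          ext g
          simp only [hM₂def, Set.mem_diff, Set.mem_insert_iff, Set.mem_singleton_iff]
          constructor
          · rintro ⟨rfl | ⟨hg1, hg2⟩, hg3⟩
            · exact absurd heN hg3
            · exact ⟨⟨hg1, hg3⟩, hg2⟩
          · rintro ⟨⟨hg1, hg2⟩, hg3⟩
            exact ⟨Or.inr ⟨hg1, hg3⟩, hg2⟩
        have h2 : N \ M₂ = (N \ M) \ {s(u, x)} := by
          ext g
          simp only [hM₂def, Set.mem_diff, Set.mem_insert_iff, Set.mem_singleton_iff]
          constructor
          · rintro ⟨hg1, hg2⟩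
            push_neg at hg2
            exact ⟨⟨hg1, fun hgM => hfN ((hg2.2 hgM) ▸ hg1)⟩, hg2.1⟩
          · rintro ⟨⟨hg1, hg2⟩, hg3⟩
            refine ⟨hg1, ?_⟩
            rintro (rfl | ⟨hg4, _⟩)
            · exact hg3 rfl
            · exact hg2 hg4
        have hlt1 : ((M \ N) \ {s(x, y)}).ncard < (M \ N).ncard :=
          Set.ncard_diff_singleton_lt_of_mem ⟨hfM, hfN⟩ (Set.toFinite _)
        have hlt2 : ((N \ M) \ {s(u, x)}).ncard < (N \ M).ncard :=
          Set.ncard_diff_singleton_lt_of_mem ⟨heN, heM⟩ (Set.toFinite _)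
        rw [h1, h2]
        omega
      obtain ⟨t, htu', htM₂, htN, ⟨N'₂, hN'₂, hN'₂card, hN'₂supp, hN'₂sub, hN'₂sup⟩,
        ⟨M'₂, hM'₂, hM'₂card, hM'₂supp⟩⟩ :=
        ih M₂ N hmeas hM₂ hN (hM₂card.trans hMmax) hNmax y hyM₂ hyN
      have htu : t ≠ u := by
        intro h
        apply htN
        rw [h]
        exact ⟨s(u, x), heN, by simp⟩
      have htM : t ∈ MSupp M := by
        rw [hM₂supp] at htM₂
        rcases htM₂ with ⟨h1, _⟩ | h
        · exact h1
        · exact absurd h htu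
      have hty : t ≠ y := by
        rintro rfl
        exact hyM₂ htM₂
      -- e ∈ N'₂
      have huN'₂ : u ∈ MSupp N'₂ := by
        rw [hN'₂supp]
        exact Or.inl ⟨⟨s(u, x), heN, by simp⟩, fun h => hyu h.symm⟩
      obtain ⟨g, hgN'₂, hug⟩ := huN'₂
      have hge : g = s(u, x) := by
        by_cases hgN : g ∈ N
        · exact hN.eq_of_mem hgN heN hug (by simp)
        · have hgM₂ : g ∈ M₂ := hN'₂sub ⟨hgN'₂, hgN⟩
          rcases Set.mem_insert_iff.mp hgM₂ with rfl | ⟨hgM, _⟩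
          · rfl
          · exact absurd ⟨g, hgM, hug⟩ huM
      subst hge
      have heN'₂ : s(x, u) ∈ N'₂ := by rwa [Sym2.eq_swap]
      have hyxE : s(y, x) ∈ G.edgeSet := by
        rw [Sym2.eq_swap]
        exact hM.1 hfM
      have hyN'₂ : y ∉ MSupp N'₂ := by
        rw [hN'₂supp]
        rintro (⟨_, h⟩ | h)
        · exact h rfl
        · exact hty h.symm
      obtain ⟨hN', hN'supp, hN'card⟩ := swap hN'₂ heN'₂ hyxE hyN'₂
      set N' := insert s(y, x) (N'₂ \ {s(x, u)}) with hN'def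
      refine ⟨t, htu, htM, htN, ⟨N', hN', hN'card.trans hN'₂card, ?_, ?_, ?_⟩,
        ⟨M'₂, hM'₂, hM'₂card, ?_⟩⟩
      · -- MSupp N' = (MSupp N \ {u}) ∪ {t}
        rw [hN'supp, hN'₂supp]
        ext z
        simp only [Set.mem_union, Set.mem_diff, Set.mem_singleton_iff]
        constructor
        · rintro (⟨⟨hz1, hz2⟩ | rfl, hz3⟩ | rfl)
          · exact Or.inl ⟨hz1, hz3⟩
          · exact Or.inr rfl
          · exact Or.inl ⟨hyN, fun h => hyu h⟩
        · rintro (⟨hz1, hz2⟩ | rfl)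
          · by_cases hzy : z = y
            · exact Or.inr hzy
            · exact Or.inl ⟨Or.inl ⟨hz1, hzy⟩, hz2⟩
          · exact Or.inl ⟨Or.inr rfl, htu⟩
      · -- N' \ N ⊆ M
        rintro g ⟨hg, hgN⟩
        rcases Set.mem_insert_iff.mp hg with rfl | ⟨hg2, hgne⟩
        · rwa [Sym2.eq_swap]
        · have hgM₂ : g ∈ M₂ := hN'₂sub ⟨hg2, hgN⟩
          rcases Set.mem_insert_iff.mp hgM₂ with rfl | ⟨hgM, _⟩
          · exact absurd Sym2.eq_swap hgne
          · exact hgM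
      · -- N ∩ M ⊆ N'
        rintro g ⟨hgN, hgM⟩
        have hgf : g ≠ s(x, y) := by rintro rfl; exact hfN hgN
        have hgM₂ : g ∈ M₂ := Set.mem_insert_of_mem _ ⟨hgM, hgf⟩
        have hgN'₂ : g ∈ N'₂ := hN'₂sup ⟨hgN, hgM₂⟩
        have hgne : g ≠ s(x, u) := by
          rintro rfl
          exact huM ⟨s(x, u), hgM, by simp⟩
        exact Set.mem_insert_of_mem _ ⟨hgN'₂, hgne⟩
      · -- MSupp M'₂ = (MSupp M \ {t}) ∪ {u}
        rw [hM'₂supp, hM₂supp]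
        ext z
        simp only [Set.mem_union, Set.mem_diff, Set.mem_singleton_iff]
        constructor
        · rintro (⟨⟨hz1, hz2⟩ | rfl, hz3⟩ | rfl)
          · exact Or.inl ⟨hz1, hz3⟩
          · exact Or.inr rfl
          · exact Or.inl ⟨hymemM, fun h => hty h.symm⟩
        · rintro (⟨hz1, hz2⟩ | rfl)
          · by_cases hzy : z = y
            · exact Or.inr hzy
            · exact Or.inl ⟨Or.inl ⟨hz1, hzy⟩, hz2⟩
          · exact Or.inl ⟨Or.inr rfl, fun h => htu h.symm⟩
    · -- base case: y is exposed in N, take t := y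
      have heN' : s(x, u) ∈ N := by rwa [Sym2.eq_swap]
      have hyxE : s(y, x) ∈ G.edgeSet := by
        rw [Sym2.eq_swap]
        exact hM.1 hfM
      obtain ⟨hN', hN'supp, hN'card⟩ := swap hN heN' hyxE hyN
      refine ⟨y, hyu, hymemM, hyN, ⟨_, hN', hN'card.trans hNmax, hN'supp, ?_, ?_⟩,
        ⟨M₂, hM₂, hM₂card.trans hMmax, hM₂supp⟩⟩
      · rintro g ⟨hg, hgN⟩
        rcases Set.mem_insert_iff.mp hg with rfl | ⟨hg2, _⟩
        · rwa [Sym2.eq_swap]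
        · exact absurd hg2 hgN
      · rintro g ⟨hgN, hgM⟩
        have hgne : g ≠ s(x, u) := by
          rintro rfl
          exact huM ⟨s(x, u), hgM, by simp⟩
        exact Set.mem_insert_of_mem _ ⟨hgN, hgne⟩

/-- Gallai-type core lemma: if every vertex of `G` is missed by some maximum matching, then no
maximum matching misses two distinct vertices lying in the same connected component. -/
lemma gallai_core (hin : ∀ v : V, ∃ s, IsMch G s ∧ s.ncard = matchingNumber G ∧ v ∉ MSupp s) :
    ∀ s, IsMch G s → s.ncard = matchingNumber G → ∀ a b : V, a ≠ b → G.Reachable a b →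
      a ∉ MSupp s → b ∉ MSupp s → False := by
  by_contra hcon
  push_neg at hcon
  obtain ⟨s₀, hs₀, hs₀max, a₀, b₀, hab₀, hreach₀, ha₀, hb₀, -⟩ := hcon
  set Bad : Set ℕ := {d | ∃ s a b, IsMch G s ∧ s.ncard = matchingNumber G ∧ a ≠ b ∧
    G.Reachable a b ∧ a ∉ MSupp s ∧ b ∉ MSupp s ∧ G.dist a b = d} with hBad
  have hBadne : Bad.Nonempty := ⟨G.dist a₀ b₀, s₀, a₀, b₀, hs₀, hs₀max, hab₀, hreach₀, ha₀, hb₀, rfl⟩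
  obtain ⟨M, u, v, hM, hMmax, huv, hreach, huM, hvM, hdist⟩ := Nat.sInf_mem hBadne
  set d := sInf Bad with hd
  -- d ≥ 2
  have hd1 : d ≠ 1 := by
    intro h1
    have hadj : G.Adj u v := by
      rw [← dist_eq_one_iff_adj, hdist, h1]
    have hins : IsMch G (insert s(u, v) M) := by
      refine ⟨Set.insert_subset hadj hM.1, ?_⟩
      refine hM.2.insert_of_symm ?_
      intro g hg _ z hz
      rcases Sym2.mem_iff.mp hz with rfl | rfl
      · exact fun h2 => huM ⟨g, hg, h2⟩
      · exact fun h2 => hvM ⟨g, hg, h2⟩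
    have hcard := ncard_le_matchingNumber hins
    rw [Set.ncard_insert_of_notMem (fun h => huM ⟨_, h, by simp⟩) (Set.toFinite _),
      hMmax] at hcard
    omega
  have hd0 : d ≠ 0 := by
    intro h0
    rw [h0] at hdist
    rcases dist_eq_zero_iff_eq_or_not_reachable.mp hdist with h | h
    · exact huv h
    · exact h hreach
  have hd2 : 2 ≤ d := by omega
  -- take a geodesic and its second vertex w
  obtain ⟨p, hp⟩ := hreach.exists_walk_length_eq_dist
  rw [hdist] at hp
  cases p with
  | nil => simp at hp; omega
  | @cons _ w _ hadj q =>
    have hqlen : q.length = d - 1 := by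
      simp only [SimpleGraph.Walk.length_cons] at hp
      omega
    have hwu : w ≠ u := hadj.ne'
    have hdistwv : G.dist w v ≤ d - 1 := hqlen ▸ dist_le q
    have hwv : w ≠ v := by
      intro h
      subst h
      have : G.dist u w ≤ 1 := dist_le hadj.toWalk
      rw [hdist] at this
      omega
    have hreachwv : G.Reachable w v := q.reachable
    -- w is covered by M
    have hwM : w ∈ MSupp M := by
      by_contra hwM
      have hmem : G.dist w v ∈ Bad := ⟨M, w, v, hM, hMmax, hwv, hreachwv, hwM, hvM, rfl⟩
      have := Nat.sInf_le hmem
      omega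
    -- choose a maximum matching N missing w with (M ∩ N).ncard maximal
    obtain ⟨N₀, hN₀, hN₀max, hwN₀⟩ := hin w
    set K : Set ℕ := {k | ∃ N, IsMch G N ∧ N.ncard = matchingNumber G ∧ w ∉ MSupp N ∧
      (M ∩ N).ncard = k} with hK
    have hKne : K.Nonempty := ⟨(M ∩ N₀).ncard, N₀, hN₀, hN₀max, hwN₀, rfl⟩
    have hKbdd : BddAbove K := by
      refine ⟨M.ncard, ?_⟩
      rintro k ⟨N, _, _, _, rfl⟩
      exact Set.ncard_le_ncard Set.inter_subset_left (Set.toFinite _)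
    obtain ⟨N, hN, hNmax, hwN, hNk⟩ := Nat.sSup_mem hKne hKbdd
    -- N covers u and v
    have huN : u ∈ MSupp N := by
      by_contra huN
      have hdistuw : G.dist u w ≤ 1 := dist_le hadj.toWalk
      have hmem : G.dist u w ∈ Bad :=
        ⟨N, u, w, hN, hNmax, fun h => hwu h.symm, ⟨hadj.toWalk⟩, huN, hwN, rfl⟩
      have := Nat.sInf_le hmem
      omega
    have hvN : v ∈ MSupp N := by
      by_contra hvN
      have hmem : G.dist w v ∈ Bad := ⟨N, w, v, hN, hNmax, hwv, hreachwv, hwN, hvN, rfl⟩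
      have := Nat.sInf_le hmem
      omega
    -- follow the alternating path from u
    obtain ⟨t, htu, htM, htN, ⟨N', hN', hN'max, hN'supp, hN'sub, hN'sup⟩,
      ⟨M', hM', hM'max, hM'supp⟩⟩ :=
      follow ((M \ N).ncard + (N \ M).ncard) M N le_rfl hM hN hMmax hNmax u huM huN
    by_cases htw : t = w
    · -- M' is a maximum matching missing both w and v : contradiction with minimality of d
      rw [htw] at hM'supp
      have hwM' : w ∉ MSupp M' := by
        rw [hM'supp]
        rintro (⟨_, h⟩ | h)
        · exact h rfl
        · exact hwu h
      have hvM' : v ∉ MSupp M' := by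
        rw [hM'supp]
        rintro (⟨h, _⟩ | h)
        · exact hvM h
        · exact huv h.symm
      have hmem : G.dist w v ∈ Bad := ⟨M', w, v, hM', hM'max, hwv, hreachwv, hwM', hvM', rfl⟩
      have := Nat.sInf_le hmem
      omega
    · -- N' is a better maximum matching missing w : contradiction with maximality of (M ∩ N)
      have hwN' : w ∉ MSupp N' := by
        rw [hN'supp]
        rintro (⟨h, _⟩ | h)
        · exact hwN h
        · exact htw h.symm
      have hsub : M ∩ N ⊆ M ∩ N' := fun g ⟨hg1, hg2⟩ => ⟨hg1, hN'sup ⟨hg2, hg1⟩⟩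
      have hne : N' ≠ N := by
        intro h
        apply htN
        rw [← h, hN'supp]
        exact Or.inr rfl
      have hexists : ∃ g, g ∈ N' \ N := by
        by_contra hng
        push_neg at hng
        have hsub2 : N' ⊆ N := fun g hg => by
          by_contra hgN
          exact hng g ⟨hg, hgN⟩
        exact hne (Set.eq_of_subset_of_ncard_le hsub2 (by rw [hNmax, hN'max]) (Set.toFinite _))
      obtain ⟨g, hgN', hgN⟩ := hexists
      have hgM : g ∈ M := hN'sub ⟨hgN', hgN⟩
      have hssub : M ∩ N ⊂ M ∩ N' := ⟨hsub, fun h => hgN (h ⟨hgM, hgN'⟩).2⟩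
      have hlt : (M ∩ N).ncard < (M ∩ N').ncard := Set.ncard_lt_ncard hssub (Set.toFinite _)
      have hmem : (M ∩ N').ncard ∈ K := ⟨N', hN', hN'max, hwN', rfl⟩
      have := le_csSup hKbdd hmem
      omega

lemma adj_of_mem_edge {e : Sym2 V} (he : e ∈ G.edgeSet) {x z : V} (hx : x ∈ e) (hz : z ∈ e)
    (hne : x ≠ z) : G.Adj x z := by
  obtain ⟨a, b⟩ := e
  rcases Sym2.mem_iff.mp hx with rfl | rfl <;> rcases Sym2.mem_iff.mp hz with rfl | rfl
  · exact absurd rfl hne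
  · exact (mem_edgeSet G).mp he
  · exact ((mem_edgeSet G).mp he).symm
  · exact absurd rfl hne

lemma reach_of_induce {s : Set V} {a b : ↥s} (h : (G.induce s).Reachable a b) :
    G.Reachable ↑a ↑b := by
  obtain ⟨w⟩ := h
  induction w with
  | nil => exact Reachable.refl _
  | cons h q ih => exact (Reachable.trans ⟨(show G.Adj _ _ by simpa using h).toWalk⟩ ih)

lemma reach_induce_of_closed {s : Set V} (hcl : ∀ a ∈ s, ∀ b, G.Adj a b → b ∈ s) {a b : V}
    (w : G.Walk a b) : ∀ (ha : a ∈ s) (hb : b ∈ s), (G.induce s).Reachable ⟨a, ha⟩ ⟨b, hb⟩ := by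
  induction w with
  | nil => intro ha hb; exact Reachable.refl _
  | @cons x y z h q ih =>
    intro ha hb
    have hy : y ∈ s := hcl x ha y h
    exact Reachable.trans
      ⟨(show (G.induce s).Adj ⟨x, ha⟩ ⟨y, hy⟩ by simpa using h).toWalk⟩ (ih hy hb)

/-- The hard direction: every graph admits a Tutte–Berge style certificate achieving `2ν`. -/
lemma hard_aux : ∀ (n : ℕ) (H : SimpleGraph V), H.edgeSet.ncard = n →
    ∃ U R S : Set V,
      Disjoint U R ∧ Disjoint U S ∧ Disjoint R S ∧ U ∪ R ∪ S = Set.univ ∧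
      (∀ C : (H.induce R).ConnectedComponent, Odd C.supp.ncard ∧ 3 ≤ C.supp.ncard) ∧
      (∀ u ∈ S, ∀ v ∈ S, ¬ H.Adj u v) ∧
      (∀ u ∈ S, ∀ v : V, H.Adj u v → v ∈ U) ∧
      2 * (U.ncard : ℤ) + (R.ncard : ℤ) -
        ({C : (H.induce R).ConnectedComponent | Odd C.supp.ncard}.ncard : ℤ) ≤
        2 * (matchingNumber H : ℤ) := by
  intro n
  induction n using Nat.strong_induction_on with
  | _ n ih =>
  intro H hHn
  classical
  by_cases hA : ∃ v, ∀ s, IsMch H s → s.ncard = matchingNumber H → v ∈ MSupp s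
  · -- Case A : some vertex is covered by every maximum matching
    obtain ⟨v, hv⟩ := hA
    set H' := H.deleteEdges (H.incidenceSet v) with hH'
    have hH'adj : ∀ a b, H'.Adj a b ↔ H.Adj a b ∧ a ≠ v ∧ b ≠ v := by
      intro a b
      rw [hH', deleteEdges_adj]
      constructor
      · rintro ⟨h1, h2⟩
        refine ⟨h1, ?_, ?_⟩ <;> rintro rfl
        · exact h2 ⟨h1, by simp⟩
        · exact h2 ⟨h1, by simp⟩
      · rintro ⟨h1, h2, h3⟩
        refine ⟨h1, fun hmem => ?_⟩
        rcases Sym2.mem_iff.mp hmem.2 with h | h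
        · exact h2 h.symm
        · exact h3 h.symm
    have hedge : H'.edgeSet = H.edgeSet \ H.incidenceSet v := H.edgeSet_deleteEdges _
    obtain ⟨s₀, hs₀, hs₀max⟩ := exists_max_mch H
    obtain ⟨e₀, he₀s, hve₀⟩ := hv s₀ hs₀ hs₀max
    have he₀ : e₀ ∈ H.incidenceSet v := ⟨hs₀.1 he₀s, hve₀⟩
    have hlt : H'.edgeSet.ncard < n := by
      rw [← hHn]
      apply Set.ncard_lt_ncard _ (Set.toFinite _)
      rw [hedge]
      exact ⟨Set.diff_subset, fun hsub => (hsub (hs₀.1 he₀s)).2 he₀⟩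
    obtain ⟨s', hs', hs'max⟩ := exists_max_mch H'
    have hs'H : IsMch H s' := ⟨hs'.1.trans (by rw [hedge]; exact Set.diff_subset), hs'.2⟩
    have hvs' : v ∉ MSupp s' := by
      rintro ⟨e, hes, hve⟩
      have hmem := hs'.1 hes
      rw [hedge] at hmem
      exact hmem.2 ⟨hmem.1, hve⟩
    have hνlt : matchingNumber H' < matchingNumber H := by
      have hle := ncard_le_matchingNumber hs'H
      rcases eq_or_lt_of_le hle with heq | hlt2
      · exact absurd (hv s' hs'H heq) hvs'
      · rwa [hs'max] at hlt2
    obtain ⟨U', R', S', hd1, hd2, hd3, hun, hcomp, hindep, hnb, hineq⟩ :=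
      ih H'.edgeSet.ncard hlt H' rfl
    have hvR' : v ∉ R' := by
      intro hvR'
      have h3 := (hcomp ((H'.induce R').connectedComponentMk ⟨v, hvR'⟩)).2
      have hsupp : ((H'.induce R').connectedComponentMk ⟨v, hvR'⟩).supp = {⟨v, hvR'⟩} := by
        ext z
        simp only [ConnectedComponent.mem_supp_iff, Set.mem_singleton_iff]
        constructor
        · intro hz
          have hr := (ConnectedComponent.exact hz).symm
          obtain ⟨wlk⟩ := hr
          cases wlk with
          | nil => rfl
          | cons h q =>
            exfalso
            exact ((hH'adj v _).mp (by simpa using h)).2.1 rfl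
        · rintro rfl
          rfl
      rw [hsupp] at h3
      simp at h3
    have hGR' : H.induce R' = H'.induce R' := by
      ext a b
      simp only [comap_adj, Function.Embedding.coe_subtype]
      rw [hH'adj]
      exact ⟨fun h => ⟨h, fun hav => hvR' (hav ▸ a.2), fun hbv => hvR' (hbv ▸ b.2)⟩,
        fun h => h.1⟩
    have hcast : (matchingNumber H' : ℤ) + 1 ≤ (matchingNumber H : ℤ) := by exact_mod_cast hνlt
    have hvmem : v ∈ U' ∪ R' ∪ S' := by rw [hun]; trivial
    rcases hvmem with (hvU | hvR) | hvS
    · -- v ∈ U'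
      refine ⟨U', R', S', hd1, hd2, hd3, hun, ?_, ?_, ?_, ?_⟩
      · rw [hGR']; exact hcomp
      · intro a ha b hb hadj
        have hav : a ≠ v := fun h => Set.disjoint_left.mp hd2 hvU (h ▸ ha)
        have hbv : b ≠ v := fun h => Set.disjoint_left.mp hd2 hvU (h ▸ hb)
        exact hindep a ha b hb ((hH'adj a b).mpr ⟨hadj, hav, hbv⟩)
      · intro a ha b hadj
        have hav : a ≠ v := fun h => Set.disjoint_left.mp hd2 hvU (h ▸ ha)
        by_cases hbv : b = v
        · rw [hbv]; exact hvU
        · exact hnb a ha b ((hH'adj a b).mpr ⟨hadj, hav, hbv⟩)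
      · rw [hGR']
        linarith [hineq]
    · exact absurd hvR hvR'
    · -- v ∈ S'
      have hvU' : v ∉ U' := Set.disjoint_right.mp hd2 hvS
      refine ⟨insert v U', R', S' \ {v}, ?_, ?_, ?_, ?_, ?_, ?_, ?_, ?_⟩
      · refine Set.disjoint_left.mpr ?_
        rintro a (rfl | ha) hb
        · exact hvR' hb
        · exact Set.disjoint_left.mp hd1 ha hb
      · refine Set.disjoint_left.mpr ?_
        rintro a (rfl | ha) hb
        · exact hb.2 rfl
        · exact Set.disjoint_left.mp hd2 ha hb.1
      · exact hd3.mono_right Set.diff_subset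
      · apply Set.eq_univ_of_forall
        intro z
        by_cases hzv : z = v
        · exact Or.inl (Or.inl (hzv ▸ Set.mem_insert _ _))
        · have hz : z ∈ U' ∪ R' ∪ S' := by rw [hun]; trivial
          rcases hz with (h | h) | h
          · exact Or.inl (Or.inl (Set.mem_insert_of_mem _ h))
          · exact Or.inl (Or.inr h)
          · exact Or.inr ⟨h, hzv⟩
      · rw [hGR']; exact hcomp
      · intro a ha b hb hadj
        exact hindep a ha.1 b hb.1 ((hH'adj a b).mpr ⟨hadj, fun h => ha.2 h, fun h => hb.2 h⟩)
      · intro a ha b hadj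
        by_cases hbv : b = v
        · rw [hbv]; exact Set.mem_insert _ _
        · exact Set.mem_insert_of_mem _
            (hnb a ha.1 b ((hH'adj a b).mpr ⟨hadj, fun h => ha.2 h, hbv⟩))
      · rw [hGR', Set.ncard_insert_of_notMem hvU' (Set.toFinite _)]
        push_cast
        linarith [hineq]
  · -- Case B : every vertex is missed by some maximum matching
    push_neg at hA
    have hcl : ∀ a ∈ H.support, ∀ b, H.Adj a b → b ∈ H.support := fun a _ b h => ⟨a, h.symm⟩
    have hodd : ∀ D : (H.induce H.support).ConnectedComponent,
        Odd D.supp.ncard ∧ 3 ≤ D.supp.ncard := by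
      intro D
      obtain ⟨u₀, rfl⟩ := D.exists_rep
      have hDdef : Quot.mk (H.induce H.support).Reachable u₀
          = (H.induce H.support).connectedComponentMk u₀ := rfl
      rw [hDdef]
      set C := H.connectedComponentMk ↑u₀ with hC
      have hmem : ∀ z : ↥H.support, ((H.induce H.support).connectedComponentMk z
          = (H.induce H.support).connectedComponentMk u₀) ↔ ↑z ∈ C.supp := by
        intro z
        constructor
        · intro h
          have hr := reach_of_induce (ConnectedComponent.exact h)
          exact (ConnectedComponent.mem_supp_iff _ _).mpr (ConnectedComponent.sound hr)
        · intro h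
          have hr : H.Reachable ↑z ↑u₀ :=
            ConnectedComponent.exact ((ConnectedComponent.mem_supp_iff _ _).mp h)
          obtain ⟨w⟩ := hr
          exact ConnectedComponent.sound (reach_induce_of_closed hcl w z.2 u₀.2)
      have himg : Subtype.val '' ((H.induce H.support).connectedComponentMk u₀).supp
          = C.supp := by
        ext x
        constructor
        · rintro ⟨z, hz, rfl⟩
          exact (hmem z).mp ((ConnectedComponent.mem_supp_iff _ _).mp hz)
        · intro hx
          have hxs : x ∈ H.support := by
            have hr : H.Reachable x ↑u₀ :=
              ConnectedComponent.exact ((ConnectedComponent.mem_supp_iff _ _).mp hx)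
            obtain ⟨w⟩ := hr
            cases w with
            | nil => exact u₀.2
            | cons h q => exact ⟨_, h⟩
          exact ⟨⟨x, hxs⟩, (ConnectedComponent.mem_supp_iff _ _).mpr ((hmem ⟨x, hxs⟩).mpr hx), rfl⟩
      have hncard : ((H.induce H.support).connectedComponentMk u₀).supp.ncard
          = C.supp.ncard := by
        rw [← himg, Set.ncard_image_of_injective _ Subtype.val_injective]
      obtain ⟨s, hs, hsmax, hu₀s⟩ := hA ↑u₀
      set t := {e ∈ s | ∃ x, x ∈ e ∧ x ∈ C.supp} with ht
      have htsub : t ⊆ s := Set.sep_subset _ _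
      have htM : IsMch H t := hs.subset htsub
      have htedge : ∀ e ∈ t, ∀ z, z ∈ e → z ∈ C.supp := by
        rintro e ⟨hes, x, hxe, hxC⟩ z hze
        by_cases hxz : x = z
        · exact hxz ▸ hxC
        · have hadj := adj_of_mem_edge (hs.1 hes) hxe hze hxz
          rw [ConnectedComponent.mem_supp_iff] at hxC ⊢
          rw [← hxC]
          exact (ConnectedComponent.connectedComponentMk_eq_of_adj hadj).symm
      have htsupp : MSupp t = C.supp \ {(↑u₀ : V)} := by
        ext z
        constructor
        · rintro ⟨e, het, hze⟩
          refine ⟨htedge e het z hze, ?_⟩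
          intro hz
          exact hu₀s ⟨e, htsub het, hz ▸ hze⟩
        · rintro ⟨hzC, hzu⟩
          have hzs : z ∈ MSupp s := by
            by_contra hzs
            exact gallai_core hA s hs hsmax z ↑u₀ (fun h => hzu h)
              (ConnectedComponent.exact ((ConnectedComponent.mem_supp_iff _ _).mp hzC)) hzs hu₀s
          obtain ⟨e, hes, hze⟩ := hzs
          exact ⟨e, ⟨hes, z, hze, hzC⟩, hze⟩
      have hu₀C : (↑u₀ : V) ∈ C.supp := (ConnectedComponent.mem_supp_iff _ _).mpr hC.symm
      have hcount : (MSupp t).ncard = 2 * t.ncard := ncard_MSupp htM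
      rw [htsupp] at hcount
      have hdiff := Set.ncard_diff_singleton_add_one hu₀C (Set.toFinite _)
      obtain ⟨w₁, hw₁⟩ := u₀.2
      have hw₁C : w₁ ∈ C.supp := (ConnectedComponent.mem_supp_iff _ _).mpr
        ((ConnectedComponent.connectedComponentMk_eq_of_adj hw₁).symm.trans hC.symm)
      have hw₁ne : (↑u₀ : V) ≠ w₁ := hw₁.ne
      have h2le : 2 ≤ C.supp.ncard := by
        rw [← Set.ncard_pair hw₁ne]
        exact Set.ncard_le_ncard
          (Set.insert_subset hu₀C (Set.singleton_subset_iff.mpr hw₁C)) (Set.toFinite _)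
      constructor
      · rw [hncard]
        exact ⟨t.ncard, by omega⟩
      · rw [hncard]
        omega
    refine ⟨∅, H.support, H.supportᶜ, ?_, ?_, ?_, ?_, hodd, ?_, ?_, ?_⟩
    · exact Set.disjoint_left.mpr (by simp)
    · exact Set.disjoint_left.mpr (by simp)
    · exact disjoint_compl_right
    · rw [Set.empty_union, Set.union_compl_self]
    · intro a ha b _ hadj
      exact ha ⟨b, hadj⟩
    · intro a ha b hadj
      exact absurd ⟨b, hadj⟩ ha
    · obtain ⟨s, hs, hsmax⟩ := exists_max_mch H
      have hsub : MSupp s ⊆ H.support := by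
        rintro z ⟨e, hes, hze⟩
        obtain ⟨y, rfl⟩ := Sym2.mem_iff_exists.mp hze
        exact ⟨y, (mem_edgeSet H).mp (hs.1 hes)⟩
      have hcount : (MSupp s).ncard = 2 * s.ncard := ncard_MSupp hs
      have hsplit := Set.ncard_diff_add_ncard_of_subset hsub (Set.toFinite _)
      have hinj : (H.support \ MSupp s).ncard ≤
          ({C : (H.induce H.support).ConnectedComponent | Odd C.supp.ncard}).ncard := by
        rcases Set.eq_empty_or_nonempty (H.support \ MSupp s) with hemp | ⟨z₀, hz₀⟩
        · rw [hemp]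
          simp
        · have hne : Nonempty (H.induce H.support).ConnectedComponent :=
            ⟨(H.induce H.support).connectedComponentMk ⟨z₀, hz₀.1⟩⟩
          set f : V → (H.induce H.support).ConnectedComponent := fun z =>
            if h : z ∈ H.support then (H.induce H.support).connectedComponentMk ⟨z, h⟩
            else Classical.arbitrary _ with hf
          apply Set.ncard_le_ncard_of_injOn f ?_ ?_ (Set.toFinite _)
          · intro z hz
            have : f z = (H.induce H.support).connectedComponentMk ⟨z, hz.1⟩ := by
              rw [hf]
              exact dif_pos hz.1
            rw [this]
            exact (hodd _).1
          · intro z hz z' hz' heq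
            by_contra hne2
            simp only [hf] at heq
            rw [dif_pos hz.1, dif_pos hz'.1] at heq
            have hr : H.Reachable z z' := reach_of_induce (ConnectedComponent.exact heq)
            exact gallai_core hA s hs hsmax z z' hne2 hr hz.2 hz'.2
      rw [hsmax] at hcount
      have hZ1 : (H.support.ncard : ℤ) ≤ 2 * (matchingNumber H : ℤ) +
          (({C : (H.induce H.support).ConnectedComponent | Odd C.supp.ncard}).ncard : ℤ) := by
        have : H.support.ncard ≤ 2 * matchingNumber H +
            ({C : (H.induce H.support).ConnectedComponent | Odd C.supp.ncard}).ncard := by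
          omega
        exact_mod_cast this
      simp only [Set.ncard_empty, Nat.cast_zero]
      linarith

/-- The easy direction: a certificate bounds the size of every matching. -/
lemma easy {U R S : Set V} (hun : U ∪ R ∪ S = Set.univ)
    (hcomp : ∀ C : (G.induce R).ConnectedComponent, Odd C.supp.ncard)
    (hindep : ∀ u ∈ S, ∀ v ∈ S, ¬ G.Adj u v) (hnb : ∀ u ∈ S, ∀ v : V, G.Adj u v → v ∈ U)
    {s : Set (Sym2 V)} (hs : IsMch G s) :
    2 * (s.ncard : ℤ) ≤ 2 * (U.ncard : ℤ) + (R.ncard : ℤ) -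
      ({C : (G.induce R).ConnectedComponent | Odd C.supp.ncard}.ncard : ℤ) := by
  classical
  set s₁ : Set (Sym2 V) := {e ∈ s | ∃ x, x ∈ e ∧ x ∈ U} with hs₁def
  set s₂ : Set (Sym2 V) := s \ s₁ with hs₂def
  have hs₂R : ∀ e ∈ s₂, ∀ x, x ∈ e → x ∈ R := by
    rintro e ⟨hes, heU⟩ x hxe
    have hnU : ∀ z, z ∈ e → z ∉ U := by
      intro z hz hzU
      exact heU ⟨hes, z, hz, hzU⟩
    have hnS : x ∉ S := by
      intro hxS
      obtain ⟨y, rfl⟩ := Sym2.mem_iff_exists.mp hxe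
      have hxy : x ≠ y := by
        intro h
        exact G.not_isDiag_of_mem_edgeSet (hs.1 hes) (by simp [h])
      have hadj : G.Adj x y := adj_of_mem_edge (hs.1 hes) (by simp) (by simp) hxy
      exact hnU y (by simp) (hnb x hxS y hadj)
    have hx : x ∈ U ∪ R ∪ S := by rw [hun]; trivial
    rcases hx with (h | h) | h
    · exact absurd h (hnU x hxe)
    · exact h
    · exact absurd h hnS
  -- bound on s₁
  have h1 : s₁.ncard ≤ U.ncard := by
    rcases Set.eq_empty_or_nonempty s₁ with h | ⟨e₀, he₀⟩
    · rw [h]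
      simp
    · have hV : Nonempty V := ⟨Classical.choose he₀.2⟩
      set f : Sym2 V → V := fun e =>
        if h : ∃ x, x ∈ e ∧ x ∈ U then Classical.choose h else Classical.arbitrary V with hf
      apply Set.ncard_le_ncard_of_injOn f ?_ ?_ (Set.toFinite _)
      · intro e he
        have hfe : f e = Classical.choose he.2 := by
          simp only [hf]
          rw [dif_pos he.2]
        rw [hfe]
        exact (Classical.choose_spec he.2).2
      · intro e he e' he' heq
        simp only [hf] at heq
        rw [dif_pos he.2, dif_pos he'.2] at heq
        exact hs.eq_of_mem he.1 he'.1 (Classical.choose_spec he.2).1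
          (heq ▸ (Classical.choose_spec he'.2).1)
  -- classify the edges of s₂ by connected components of G[R]
  haveI : Fintype ↥R := Fintype.ofFinite _
  haveI : Fintype (G.induce R).ConnectedComponent := Fintype.ofFinite _
  haveI : Nonempty ((G.induce R).ConnectedComponent) ∨ True := Or.inr trivial
  have hRmemD : ∀ {e : Sym2 V}, e ∈ s₂ → ∃ x, x ∈ e ∧ x ∈ R := by
    intro e he
    obtain ⟨a, b⟩ := e
    exact ⟨a, by simp, hs₂R _ he a (by simp)⟩
  by_cases hRe : Nonempty ((G.induce R).ConnectedComponent)
  case neg =>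
    -- R has no components, hence s₂ is empty
    have hs₂e : s₂ = ∅ := by
      rw [Set.eq_empty_iff_forall_notMem]
      intro e he
      obtain ⟨x, hxe, hxR⟩ := hRmemD he
      exact hRe ⟨(G.induce R).connectedComponentMk ⟨x, hxR⟩⟩
    have hss : s = s₁ := by
      rw [hs₂def] at hs₂e
      rw [← Set.diff_union_of_subset (Set.sep_subset _ _ : s₁ ⊆ s), hs₂e, Set.empty_union]
    have hRE : R = ∅ := by
      rw [Set.eq_empty_iff_forall_notMem]
      intro x hx
      exact hRe ⟨(G.induce R).connectedComponentMk ⟨x, hx⟩⟩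
    have hoddE : ({C : (G.induce R).ConnectedComponent | Odd C.supp.ncard}).ncard = 0 := by
      have : IsEmpty ((G.induce R).ConnectedComponent) := not_nonempty_iff.mp hRe
      simp [Set.eq_empty_of_isEmpty]
    rw [hss, hoddE, hRE]
    simp only [Set.ncard_empty, Nat.cast_zero]
    push_cast
    linarith [h1]
  case pos =>
  set g : Sym2 V → (G.induce R).ConnectedComponent := fun e =>
    if h : ∃ x, x ∈ e ∧ x ∈ R then
      (G.induce R).connectedComponentMk ⟨Classical.choose h, (Classical.choose_spec h).2⟩
    else Classical.arbitrary _ with hg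
  -- per-component bound
  have hfib : ∀ D : (G.induce R).ConnectedComponent,
      2 * {e ∈ s₂ | g e = D}.ncard + 1 ≤ D.supp.ncard := by
    intro D
    set tD := {e ∈ s₂ | g e = D} with htD
    have htDs : tD ⊆ s := fun e he => he.1.1
    have htDm : IsMch G tD := hs.subset htDs
    have hsupp : MSupp tD ⊆ Subtype.val '' D.supp := by
      rintro x ⟨e, ⟨he₂, heD⟩, hxe⟩
      have hxR : x ∈ R := hs₂R e he₂ x hxe
      have hex : ∃ z, z ∈ e ∧ z ∈ R := ⟨x, hxe, hxR⟩
      have hgd : (G.induce R).connectedComponentMk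
          ⟨Classical.choose hex, (Classical.choose_spec hex).2⟩ = D := by
        rw [← heD]
        simp only [hg]
        rw [dif_pos hex]
      set x₀ := Classical.choose hex with hx₀
      have hx₀e : x₀ ∈ e := (Classical.choose_spec hex).1
      have hx₀R : x₀ ∈ R := (Classical.choose_spec hex).2
      by_cases hxx : x = x₀
      · refine ⟨⟨x, hxR⟩, ?_, rfl⟩
        rw [ConnectedComponent.mem_supp_iff, ← hgd]
        congr 1
        exact Subtype.ext hxx
      · have hadj : G.Adj x₀ x := adj_of_mem_edge (hs.1 (htDs ⟨he₂, heD⟩)) hx₀e hxe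
          (fun h => hxx h.symm)
        have hadj' : (G.induce R).Adj ⟨x₀, hx₀R⟩ ⟨x, hxR⟩ := by simpa using hadj
        refine ⟨⟨x, hxR⟩, ?_, rfl⟩
        rw [ConnectedComponent.mem_supp_iff, ← hgd]
        exact (ConnectedComponent.connectedComponentMk_eq_of_adj hadj').symm
    have hc1 : (MSupp tD).ncard = 2 * tD.ncard := ncard_MSupp htDm
    have hc2 : (MSupp tD).ncard ≤ (Subtype.val '' D.supp).ncard :=
      Set.ncard_le_ncard hsupp (Set.toFinite _)
    rw [Set.ncard_image_of_injective _ Subtype.val_injective] at hc2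
    obtain ⟨r, hr⟩ := hcomp D
    omega
  -- sum over fibers
  have hs₂fin := Set.toFinite s₂
  set s₂F := hs₂fin.toFinset with hs₂F
  have hsum1 : s₂F.card = ∑ D : (G.induce R).ConnectedComponent,
      (s₂F.filter fun e => g e = D).card :=
    Finset.card_eq_sum_card_fiberwise (fun e _ => Finset.mem_univ _)
  have hfibeq : ∀ D, {e ∈ s₂ | g e = D}.ncard = (s₂F.filter fun e => g e = D).card := by
    intro D
    rw [← Set.ncard_coe_finset]
    congr 1
    ext e
    simp [hs₂F, Set.Finite.mem_toFinset]
  have hs₂card : s₂.ncard = s₂F.card := by rw [hs₂F]; exact Set.ncard_eq_toFinset_card _ hs₂fin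
  -- total size of R
  have hsum2 : ∑ D : (G.induce R).ConnectedComponent,
      D.supp.ncard = R.ncard := by
    have hR : R.ncard = Fintype.card ↥R := by
      rw [← Nat.card_coe_set_eq, Nat.card_eq_fintype_card]
    have hcard := Finset.card_eq_sum_card_fiberwise
      (f := (G.induce R).connectedComponentMk) (t := Finset.univ)
      (fun z _ => Finset.mem_univ _) (s := Finset.univ)
    have hDcard : ∀ D : (G.induce R).ConnectedComponent,
        D.supp.ncard = (Finset.univ.filter
          fun z => (G.induce R).connectedComponentMk z = D).card := by
      intro D
      rw [← Set.ncard_coe_finset]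
      congr 1
      ext z
      simp [ConnectedComponent.mem_supp_iff]
    rw [hR]
    rw [← Finset.card_univ, hcard]
    exact Finset.sum_congr rfl fun D _ => hDcard D
  have hodduniv : ({C : (G.induce R).ConnectedComponent | Odd C.supp.ncard}).ncard
      = Fintype.card ((G.induce R).ConnectedComponent) := by
    have : {C : (G.induce R).ConnectedComponent | Odd C.supp.ncard} = Set.univ := by
      ext C
      simp [hcomp C]
    rw [this, Set.ncard_univ, Nat.card_eq_fintype_card]
  have hkey : 2 * s₂.ncard + Fintype.card ((G.induce R).ConnectedComponent) ≤ R.ncard := by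
    rw [hs₂card, hsum1, ← hsum2, ← Finset.card_univ]
    rw [Finset.mul_sum, Finset.card_eq_sum_ones Finset.univ, ← Finset.sum_add_distrib]
    apply Finset.sum_le_sum
    intro D _
    have := hfib D
    rw [hfibeq D] at this
    omega
  have hsplit : s₂.ncard + s₁.ncard = s.ncard :=
    Set.ncard_diff_add_ncard_of_subset (Set.sep_subset _ _) (Set.toFinite _)
  rw [hodduniv]
  push_cast
  omega

end fin





end TBAux

/-- Tutte–Berge style characterization: `ν(G) ≤ m` iff `V(G)` partitions into pairwise
disjoint sets `U`, `R`, `S` such that every connected component of `G[R]` has odd size at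
least 3, `S` is independent, all neighbors of vertices of `S` lie in `U`, and
`2|U| + |R| − odd(G[R]) ≤ 2m`. -/
theorem stmt_13 {V : Type*} [Fintype V] (G : SimpleGraph V) (m : ℤ) :
    (matchingNumber G : ℤ) ≤ m ↔
    ∃ U R S : Set V,
      Disjoint U R ∧ Disjoint U S ∧ Disjoint R S ∧ U ∪ R ∪ S = Set.univ ∧
      (∀ C : (G.induce R).ConnectedComponent, Odd C.supp.ncard ∧ 3 ≤ C.supp.ncard) ∧
      (∀ u ∈ S, ∀ v ∈ S, ¬ G.Adj u v) ∧
      (∀ u ∈ S, ∀ v : V, G.Adj u v → v ∈ U) ∧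
      2 * (U.ncard : ℤ) + (R.ncard : ℤ) -
        ({C : (G.induce R).ConnectedComponent | Odd C.supp.ncard}.ncard : ℤ) ≤ 2 * m := by
  constructor
  · intro hle
    obtain ⟨U, R, S, h1, h2, h3, h4, h5, h6, h7, h8⟩ := TBAux.hard_aux G.edgeSet.ncard G rfl
    exact ⟨U, R, S, h1, h2, h3, h4, h5, h6, h7, by linarith⟩
  · rintro ⟨U, R, S, h1, h2, h3, h4, h5, h6, h7, h8⟩
    obtain ⟨s, hs, hsmax⟩ := TBAux.exists_max_mch G
    have hb := TBAux.easy h4 (fun C => (h5 C).1) h6 h7 hs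
    rw [← hsmax]
    linarith
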